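/- With G⁺_{ij}(x;t) = t^{i-j} Π_{i<k≤j}(x_k - t x_j) / Π_{i≤k<j}(x_k - x_j) for 1 ≤ i ≤ j ≤ n, one has the column-sum identity Σ_{i≤k≤j} t^{j-k} G⁺_{kj}(x;t) = Δ(x_i,…,x_{j-1}, t x_j)/Δ(x_i,…,x_j) for all 1 ≤ i ≤ j ≤ n. -/

import Mathlib

open Finset

-- sign lemma
lemma prod_sub_swap {K : Type*} [Field K] (s : Finset ℕ) (f : ℕ → K) (c : K) :
    ∏ m ∈ s, (f m - c) = (-1) ^ s.card * ∏ m ∈ s, (c - f m) := by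
  rw [← Finset.prod_const, ← Finset.prod_mul_distrib]
  exact Finset.prod_congr rfl fun m _ => by ring

lemma key {K : Type*} [Field K] (y : ℕ → K) (c : K) :
    ∀ d a b : ℕ, b = a + d → (∀ m, m ∈ Finset.Ico a b → y m ≠ y b) →
    (∑ k ∈ Finset.Icc a b,
        (∏ m ∈ Finset.Ioc k b, (y m - c)) / ∏ m ∈ Finset.Ico k b, (y m - y b)) =
      (∏ m ∈ Finset.Ico a b, (c - y m)) / ∏ m ∈ Finset.Ico a b, (y b - y m) := by
  intro d
  induction d with
  | zero =>
    intro a b hb _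
    subst hb; simp
  | succ d ih =>
    intro a b hb hne
    have hab : a < b := by omega
    have h1 : Finset.Icc a b = insert a (Finset.Icc (a+1) b) := by
      ext m; simp; omega
    have h2 : Finset.Ico a b = insert a (Finset.Ico (a+1) b) := by
      ext m; simp; omega
    have h3 : Finset.Ioc a b = insert b (Finset.Ico (a+1) b) := by
      ext m; simp; omega
    have ha1 : a ∉ Finset.Icc (a+1) b := by simp
    have ha2 : a ∉ Finset.Ico (a+1) b := by simp
    have hb3 : b ∉ Finset.Ico (a+1) b := by simp
    rw [h1, Finset.sum_insert ha1, ih (a+1) b (by omega) (fun m hm => hne m (by simp at hm ⊢; omega))]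
    rw [h2, Finset.prod_insert ha2, Finset.prod_insert ha2, h3, Finset.prod_insert hb3]
    rw [prod_sub_swap (Finset.Ico (a+1) b) y c]
    rw [prod_sub_swap (Finset.Ico (a+1) b) y (y b), Finset.prod_insert ha2]
    set P := ∏ m ∈ Finset.Ico (a+1) b, (c - y m) with hP
    set Q := ∏ m ∈ Finset.Ico (a+1) b, (y b - y m) with hQ
    have hQ0 : Q ≠ 0 := Finset.prod_ne_zero_iff.2 fun m hm =>
      sub_ne_zero.2 (Ne.symm (hne m (by simp at hm ⊢; omega)))
    have hya : y a - y b ≠ 0 := sub_ne_zero.2 (hne a (by simp; omega))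
    have hyb : y b - y a ≠ 0 := fun h => hya (by linear_combination -h)
    have hsgn : ((-1 : K)) ^ (Finset.Ico (a+1) b).card ≠ 0 := by
      exact pow_ne_zero _ (by norm_num)
    field_simp
    ring


section helpers
variable {K : Type*} [Field K] {n : ℕ}

lemma fin_prod_Ioc (a b : Fin n) (f : Fin n → K) (g : ℕ → K)
    (h : ∀ m : Fin n, f m = g m.val) :
    ∏ m ∈ Finset.Ioc a b, f m = ∏ m ∈ Finset.Ioc (a : ℕ) (b : ℕ), g m := by
  rw [← Fin.map_valEmbedding_Ioc, Finset.prod_map]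
  exact Finset.prod_congr rfl fun m _ => h m

lemma fin_prod_Ico (a b : Fin n) (f : Fin n → K) (g : ℕ → K)
    (h : ∀ m : Fin n, f m = g m.val) :
    ∏ m ∈ Finset.Ico a b, f m = ∏ m ∈ Finset.Ico (a : ℕ) (b : ℕ), g m := by
  rw [← Fin.map_valEmbedding_Ico, Finset.prod_map]
  exact Finset.prod_congr rfl fun m _ => h m

end helpers

/-- with `G⁺_{kj} = t^{k-j} Π_{k<m≤j}(x_m - t x_j) / Π_{k≤m<j}(x_m - x_j)`,
one has `Σ_{i≤k≤j} t^{j-k} G⁺_{kj} = Δ(x_i,…,x_{j-1},t x_j)/Δ(x_i,…,x_j)`. -/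
theorem stmt_7 {K : Type*} [Field K] (n : ℕ) (t : K) (x : Fin n → K)
    (ht : t ≠ 0) (hx0 : ∀ i, x i ≠ 0) (hinj : Function.Injective x)
    (htx : ∀ k i, t * x k ≠ x i) :
    ∀ i j : Fin n, i ≤ j →
      (∑ k ∈ Finset.Icc i j, t ^ ((j : ℤ) - (k : ℤ)) *
          (t ^ ((k : ℤ) - (j : ℤ)) * (∏ m ∈ Finset.Ioc k j, (x m - t * x j)) /
            ∏ m ∈ Finset.Ico k j, (x m - x j))) =
        ((∏ p ∈ (Finset.Ico i j ×ˢ Finset.Ico i j).filter fun p => p.1 < p.2,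
            (x p.2 - x p.1)) * ∏ m ∈ Finset.Ico i j, (t * x j - x m)) /
          ∏ p ∈ (Finset.Icc i j ×ˢ Finset.Icc i j).filter fun p => p.1 < p.2,
            (x p.2 - x p.1) := by
  intro i j hij
  set y : ℕ → K := fun m => if h : m < n then x ⟨m, h⟩ else 1 with hy
  have hyx : ∀ m : Fin n, y m.val = x m := by
    intro m; simp [hy, m.isLt]
  -- Step 1: kill the t powers
  have step1 : (∑ k ∈ Finset.Icc i j, t ^ ((j : ℤ) - (k : ℤ)) *
          (t ^ ((k : ℤ) - (j : ℤ)) * (∏ m ∈ Finset.Ioc k j, (x m - t * x j)) /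
            ∏ m ∈ Finset.Ico k j, (x m - x j))) =
      ∑ k ∈ Finset.Icc i j,
        (∏ m ∈ Finset.Ioc k j, (x m - t * x j)) / ∏ m ∈ Finset.Ico k j, (x m - x j) := by
    refine Finset.sum_congr rfl fun k _ => ?_
    rw [mul_div_assoc', ← mul_assoc, ← zpow_add₀ ht,
      show ((j : ℤ) - (k : ℤ) + ((k : ℤ) - (j : ℤ))) = 0 by ring, zpow_zero, one_mul]
  rw [step1]
  -- Step 2: transfer the sum to ℕ and apply key
  have step2 : (∑ k ∈ Finset.Icc i j,
        (∏ m ∈ Finset.Ioc k j, (x m - t * x j)) / ∏ m ∈ Finset.Ico k j, (x m - x j)) =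
      ∑ k ∈ Finset.Icc (i : ℕ) (j : ℕ),
        (∏ m ∈ Finset.Ioc k (j : ℕ), (y m - t * x j)) /
          ∏ m ∈ Finset.Ico k (j : ℕ), (y m - x j) := by
    rw [← Fin.map_valEmbedding_Icc, Finset.sum_map]
    refine Finset.sum_congr rfl fun k _ => ?_
    congr 1
    · exact fin_prod_Ioc k j _ _ fun m => by rw [hyx]
    · exact fin_prod_Ico k j _ _ fun m => by rw [hyx]
  have hne : ∀ m, m ∈ Finset.Ico (i : ℕ) (j : ℕ) → y m ≠ x j := by
    intro m hm
    simp only [Finset.mem_Ico] at hm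
    have hmn : m < n := lt_trans hm.2 j.isLt
    simp only [hy, dif_pos hmn]
    intro h
    have := hinj h
    have : m = (j : ℕ) := congrArg Fin.val this
    omega
  have hxjy : x j = y (j : ℕ) := (hyx j).symm
  have hkey := key y (t * x j) ((j : ℕ) - (i : ℕ)) (i : ℕ) (j : ℕ)
    (by omega) (by rw [← hxjy]; exact hne)
  rw [← hxjy] at hkey
  rw [step2, hkey]
  -- Step 3: split the big Δ product
  have e : K ≃ K := Equiv.refl K  -- dummy
  clear e
  set emb : Fin n ↪ Fin n × Fin n :=
    ⟨fun a => (a, j), fun a b h => (Prod.mk.injEq _ _ _ _ ▸ h : _ ∧ _).1⟩ with hemb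
  have hunion : ((Finset.Icc i j ×ˢ Finset.Icc i j).filter fun p => p.1 < p.2) =
      ((Finset.Ico i j ×ˢ Finset.Ico i j).filter fun p => p.1 < p.2) ∪
        (Finset.Ico i j).map emb := by
    ext ⟨p1, p2⟩
    simp only [Finset.mem_union, Finset.mem_filter, Finset.mem_product, Finset.mem_Icc,
      Finset.mem_Ico, Finset.mem_map, hemb, Function.Embedding.coeFn_mk, Prod.mk.injEq]
    constructor
    · rintro ⟨⟨⟨h1, h2⟩, h3, h4⟩, h5⟩
      rcases lt_or_eq_of_le h4 with h | h
      · exact Or.inl ⟨⟨⟨h1, h5.trans h⟩, h3, h⟩, h5⟩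
      · exact Or.inr ⟨p1, ⟨h1, h ▸ h5⟩, by simp [h]; rfl⟩
    · rintro (⟨⟨⟨h1, h2⟩, h3, h4⟩, h5⟩ | ⟨a, ⟨h1, h2⟩, rfl, rfl⟩)
      · exact ⟨⟨⟨h1, h2.le⟩, h3, h4.le⟩, h5⟩
      · exact ⟨⟨⟨h1, h2.le⟩, hij, le_refl _⟩, h2⟩
  have hdisj : Disjoint ((Finset.Ico i j ×ˢ Finset.Ico i j).filter fun p => p.1 < p.2)
      ((Finset.Ico i j).map emb) := by
    rw [Finset.disjoint_left]
    rintro ⟨p1, p2⟩ hp hq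
    simp only [Finset.mem_filter, Finset.mem_product, Finset.mem_Ico] at hp
    simp only [Finset.mem_map, hemb, Function.Embedding.coeFn_mk, Prod.mk.injEq] at hq
    obtain ⟨a, _, _, rfl⟩ := hq
    exact absurd hp.1.2.2 (lt_irrefl _)
  rw [hunion, Finset.prod_union hdisj, Finset.prod_map]
  simp only [hemb, Function.Embedding.coeFn_mk]
  set D1 := ∏ p ∈ (Finset.Ico i j ×ˢ Finset.Ico i j).filter fun p => p.1 < p.2,
      (x p.2 - x p.1) with hD1
  have hD1ne : D1 ≠ 0 := by
    rw [hD1]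
    refine Finset.prod_ne_zero_iff.2 fun p hp => ?_
    simp only [Finset.mem_filter] at hp
    exact sub_ne_zero.2 fun h => absurd (hinj h) (ne_of_gt hp.2)
  rw [mul_div_mul_left _ _ hD1ne]
  congr 1
  · exact (fin_prod_Ico i j _ _ fun m => by rw [hyx]).symm
  · exact (fin_prod_Ico i j _ _ fun m => by rw [hyx]; rfl).symm
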